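/- arXiv:2201.08681 — 2 statements merged into one kernel-verified Lean document; each statement's English description precedes it below -/
import Mathlib

section
/- Maker has a winning strategy in the Maker-Breaker game MB(K_ω, K_ω) on the countably infinite complete graph, where her goal is to build a copy of the countably infinite complete graph. -/
open Cardinal

universe u v

/-- A strategy in a transfinite positional game with moves of type `α`:
given the current turn (an ordinal) and the history of all moves made at
earlier turns, it produces a move. -/
def MBStrategy (α : Type u) : Type (u + 1) :=
  ∀ γ : Ordinal.{u}, (∀ β : Ordinal.{u}, β < γ → α) → α

/-- A completed play of a transfinite positional game on the board `board`:
an ordinal-indexed sequence of moves, each an element of the board that was not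
claimed at any earlier turn, which goes on until every element of the board has
been claimed. -/
structure MBPlay {α : Type u} (board : Set α) : Type (u + 1) where
  len : Ordinal.{u}
  move : ∀ γ : Ordinal.{u}, γ < len → α
  move_mem : ∀ γ h, move γ h ∈ board
  move_inj : ∀ γ₁ h₁ γ₂ h₂, move γ₁ h₁ = move γ₂ h₂ → γ₁ = γ₂
  complete : ∀ e ∈ board, ∃ γ h, move γ h = e

namespace MBPlay

variable {α : Type u} {board : Set α}

/-- The set of board elements claimed at the turns satisfying `turns`. -/
def claimed (p : MBPlay board) (turns : Ordinal.{u} → Prop) : Set α :=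
  {e | ∃ γ h, turns γ ∧ p.move γ h = e}

/-- The play is consistent with the player moving at the turns satisfying
`turns` using the strategy `σ`. -/
def Follows (p : MBPlay board) (turns : Ordinal.{u} → Prop) (σ : MBStrategy α) : Prop :=
  ∀ γ h, turns γ → p.move γ h = σ γ (fun β hβ => p.move β (hβ.trans h))

end MBPlay

/-- In the Maker–Breaker game the moves alternate with Maker moving first: the
turn `γ` belongs to Maker iff `γ % 2 = 0`.  In particular turn `0` and all
limit turns belong to Maker, and Breaker answers Maker's preceding move. -/
def makerTurn (γ : Ordinal.{u}) : Prop := γ % 2 = 0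

/-- The turns on which Breaker moves in the Maker–Breaker game. -/
def breakerTurn (γ : Ordinal.{u}) : Prop := γ % 2 = 1

/-- A strategy is legal for the player moving at the turns satisfying `turns`
if at every position (arising at such a turn) in which some element of the
board is still unclaimed, it produces an unclaimed element of the board. -/
def MBStrategy.IsLegal {α : Type u} (σ : MBStrategy α) (board : Set α)
    (turns : Ordinal.{u} → Prop) : Prop :=
  ∀ (γ : Ordinal.{u}) (hist : ∀ β : Ordinal.{u}, β < γ → α), turns γ →
    (∀ β h, hist β h ∈ board) →
    (∀ β₁ h₁ β₂ h₂, hist β₁ h₁ = hist β₂ h₂ → β₁ = β₂) →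
    (∃ e ∈ board, ∀ β h, hist β h ≠ e) →
    σ γ hist ∈ board ∧ ∀ β h, hist β h ≠ σ γ hist

/-- `G` contains a copy of `H`, i.e. a subgraph isomorphic to `H`; equivalently
there is an injective graph homomorphism from `H` into `G`. -/
def ContainsCopy {V : Type u} {W : Type v} (G : SimpleGraph V) (H : SimpleGraph W) : Prop :=
  ∃ f : H →g G, Function.Injective f

/-- Maker has a winning strategy in the Maker–Breaker game `MB(G, H)`:
playing at the even turns (including turn `0` and all limit turns) of a
transfinite play on the edge set of `G`, she can ensure that whatever Breaker
does at the odd turns, at the end of the play the graph formed by her claimed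
edges contains a copy of `H`. -/
def MakerWins {V : Type u} {W : Type v} (G : SimpleGraph V) (H : SimpleGraph W) : Prop :=
  ∃ σ : MBStrategy (Sym2 V), σ.IsLegal G.edgeSet makerTurn ∧
    ∀ p : MBPlay G.edgeSet, p.Follows makerTurn σ →
      ContainsCopy (SimpleGraph.fromEdgeSet (p.claimed makerTurn)) H

/-- Breaker has a winning strategy in the Maker–Breaker game `MB(G, H)`:
playing at the odd turns of a transfinite play on the edge set of `G`, he can
ensure that at the end of the play the graph formed by Maker's claimed edges
does not contain a copy of `H`. -/
def BreakerWins {V : Type u} {W : Type v} (G : SimpleGraph V) (H : SimpleGraph W) : Prop :=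
  ∃ σ : MBStrategy (Sym2 V), σ.IsLegal G.edgeSet breakerTurn ∧
    ∀ p : MBPlay G.edgeSet, p.Follows breakerTurn σ →
      ¬ ContainsCopy (SimpleGraph.fromEdgeSet (p.claimed makerTurn)) H

/- ================================================================
   Auxiliary development for the proof of Statement 10.

   Maker's strategy: she builds a tree of vertices, rooted at `0`, in
   which every node is joined by Maker-claimed edges to all of its
   ancestors.  She works on one fresh "candidate" vertex at a time; the
   candidate descends through the tree (claiming the edge to each node
   on its way down) as long as some existing child of its current node
   is still joined to it by an unclaimed edge; when no such child
   exists, the candidate settles as a new child of its current node and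
   a fresh candidate is selected.  Since a candidate is a completely
   untouched vertex when it starts, Breaker can claim at most
   `depth + 1` edges at it during its descent, so every node at depth
   `d` ends up with at most `d + 2` children; the tree is infinite and
   finitely branching, hence has an infinite branch, which is an
   infinite clique in Maker's graph.
   ================================================================ -/

namespace KOmegaAux

open scoped Classical

/-- The board: edges of the complete graph on `ℕ`. -/
abbrev Board : Set (Sym2 ℕ) := (⊤ : SimpleGraph ℕ).edgeSet

/-- Maker's bookkeeping state: the list of settled vertices (most recent
first), the path (list of strict ancestors, root first) of every settled
vertex, the current candidate, the part of the tree path the candidate has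
already claimed, and the turn at which the candidate made its first move. -/
structure TS where
  settled : List ℕ
  path : ℕ → List ℕ
  cand : ℕ
  pos : List ℕ
  start : ℕ

def initTS : TS := ⟨[], fun _ => [], 1, [], 0⟩

lemma sym2_bound (e : Sym2 ℕ) : ∃ B : ℕ, ∀ x ∈ e, x < B := by
  induction e using Sym2.ind with
  | _ a b =>
    refine ⟨a + b + 1, fun x hx => ?_⟩
    rw [Sym2.mem_iff] at hx
    rcases hx with rfl | rfl <;> omega

lemma freshV_exists (h : List (Sym2 ℕ)) : ∃ v : ℕ, 0 < v ∧ ∀ e ∈ h, v ∉ e := by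
  suffices hs : ∃ B : ℕ, ∀ e ∈ h, ∀ x ∈ e, x < B by
    obtain ⟨B, hB⟩ := hs
    exact ⟨B + 1, Nat.succ_pos B, fun e he hv => by have := hB e he _ hv; omega⟩
  induction h with
  | nil => exact ⟨0, by simp⟩
  | cons e t ih =>
    obtain ⟨B1, hB1⟩ := ih
    obtain ⟨B2, hB2⟩ := sym2_bound e
    refine ⟨max B1 B2, fun e' he' x hx => ?_⟩
    rcases List.mem_cons.mp he' with rfl | ht
    · exact lt_of_lt_of_le (hB2 x hx) (le_max_right _ _)
    · exact lt_of_lt_of_le (hB1 e' ht x hx) (le_max_left _ _)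

/-- A vertex untouched by all edges in the history `h` (and different
from the root `0`). -/
noncomputable def freshV (h : List (Sym2 ℕ)) : ℕ := Nat.find (freshV_exists h)

lemma freshV_spec (h : List (Sym2 ℕ)) : 0 < freshV h ∧ ∀ e ∈ h, freshV h ∉ e :=
  Nat.find_spec (freshV_exists h)

/-- The available children: settled vertices whose path is the candidate's
current position and whose edge to the candidate is unclaimed. -/
noncomputable def avail (t : TS) (h : List (Sym2 ℕ)) : List ℕ :=
  t.settled.filter (fun c => decide (t.path c = t.pos ∧ s(t.cand, c) ∉ h))

/-- One step of Maker's strategy: given her state and the (reversed)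
history list, produce the move she makes and her updated state. -/
noncomputable def step (st : TS) (h : List (Sym2 ℕ)) : Sym2 ℕ × TS :=
  if st.pos = [] then
    (s(st.cand, 0), { st with pos := [0], start := h.length })
  else
    if hav : avail st h = [] then
      (s(freshV h, 0),
        { settled := st.cand :: st.settled
          path := Function.update st.path st.cand st.pos
          cand := freshV h
          pos := [0]
          start := h.length })
    else
      (s(st.cand, (avail st h).head hav), { st with pos := st.pos ++ [(avail st h).head hav] })

/-- Maker's state after a (reversed) history list. -/
noncomputable def stateAfter : List (Sym2 ℕ) → TS
  | [] => initTS
  | _ :: h => if h.length % 2 = 0 then (step (stateAfter h) h).2 else stateAfter h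

/-- Maker's move after a (reversed) history list, with a legality fallback. -/
noncomputable def moveList (h : List (Sym2 ℕ)) : Sym2 ℕ :=
  if (step (stateAfter h) h).1 ∈ Board ∧ (step (stateAfter h) h).1 ∉ h then
    (step (stateAfter h) h).1
  else if H : ∃ e ∈ Board, e ∉ h then H.choose
  else s(0, 1)

/-- The reversed list of the first `n` moves of an ordinal-indexed history. -/
noncomputable def toList (γ : Ordinal.{0}) (hist : ∀ β : Ordinal.{0}, β < γ → Sym2 ℕ) :
    ℕ → List (Sym2 ℕ)
  | 0 => []
  | n + 1 =>
    if hh : (n : Ordinal.{0}) < γ then hist n hh :: toList γ hist n else toList γ hist n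

/-- Maker's strategy. -/
noncomputable def sigma : MBStrategy (Sym2 ℕ) := fun γ hist =>
  if hfin : ∃ n : ℕ, γ = (n : Ordinal) then moveList (toList γ hist hfin.choose)
  else if H : ∃ e ∈ Board, ∀ β hβ, hist β hβ ≠ e then H.choose
  else s(0, 1)

lemma mem_toList_iff {γ : Ordinal.{0}} {hist : ∀ β : Ordinal.{0}, β < γ → Sym2 ℕ}
    {n : ℕ} {e : Sym2 ℕ} :
    e ∈ toList γ hist n ↔ ∃ (i : ℕ) (_ : i < n) (hh : (i : Ordinal) < γ), hist i hh = e := by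
  induction n with
  | zero => simp [toList]
  | succ n ih =>
    rw [toList]
    split
    · next hh =>
      simp only [List.mem_cons, ih]
      constructor
      · rintro (rfl | ⟨i, hi, hih, he⟩)
        · exact ⟨n, Nat.lt_succ_self n, hh, rfl⟩
        · exact ⟨i, Nat.lt_succ_of_lt hi, hih, he⟩
      · rintro ⟨i, hi, hih, he⟩
        rcases Nat.lt_succ_iff_lt_or_eq.mp hi with hi' | rfl
        · exact Or.inr ⟨i, hi', hih, he⟩
        · exact Or.inl (by rw [← he])
    · next hh =>
      rw [ih]
      constructor
      · rintro ⟨i, hi, hih, he⟩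
        exact ⟨i, Nat.lt_succ_of_lt hi, hih, he⟩
      · rintro ⟨i, hi, hih, he⟩
        rcases Nat.lt_succ_iff_lt_or_eq.mp hi with hi' | rfl
        · exact ⟨i, hi', hih, he⟩
        · exact absurd hih hh

lemma lt_natCast_iff {β : Ordinal.{0}} {n : ℕ} :
    β < (n : Ordinal) ↔ ∃ i : ℕ, i < n ∧ β = (i : Ordinal) := by
  constructor
  · intro hβ
    have hω : β < Ordinal.omega0 := hβ.trans_le (Ordinal.nat_lt_omega0 n).le
    obtain ⟨i, rfl⟩ := Ordinal.lt_omega0.mp hω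
    exact ⟨i, Nat.cast_lt.mp hβ, rfl⟩
  · rintro ⟨i, hi, rfl⟩
    exact Nat.cast_lt.mpr hi

lemma sigma_isLegal : sigma.IsLegal Board makerTurn := by
  intro γ hist _ _ _ hex
  by_cases hfin : ∃ n : ℕ, γ = (n : Ordinal)
  · rw [sigma, dif_pos hfin]
    set n := hfin.choose with hn
    have hγ : γ = (n : Ordinal) := hfin.choose_spec
    have hmem : ∀ e, e ∈ toList γ hist n → ∃ β hβ, hist β hβ = e := by
      intro e he
      obtain ⟨i, _, hih, hie⟩ := mem_toList_iff.mp he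
      exact ⟨i, hih, hie⟩
    rw [moveList]
    split
    · next hcond =>
      refine ⟨hcond.1, fun β hβ heq => hcond.2 ?_⟩
      rw [← heq]
      rw [hγ] at hβ
      obtain ⟨i, hi, hβi⟩ := lt_natCast_iff.mp hβ
      subst hβi
      rw [mem_toList_iff]
      exact ⟨i, hi, by rw [hγ]; exact hβ, rfl⟩
    · next hcond =>
      have hex' : ∃ e ∈ Board, e ∉ toList γ hist n := by
        obtain ⟨e, he, hfr⟩ := hex
        refine ⟨e, he, fun hm => ?_⟩
        obtain ⟨β, hβ, heq⟩ := hmem e hm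
        exact hfr β hβ heq
      rw [dif_pos hex']
      obtain ⟨he, hfr⟩ := hex'.choose_spec
      refine ⟨he, fun β hβ heq => hfr ?_⟩
      rw [← heq]
      rw [hγ] at hβ
      obtain ⟨i, hi, hβi⟩ := lt_natCast_iff.mp hβ
      subst hβi
      rw [mem_toList_iff]
      exact ⟨i, hi, by rw [hγ]; exact hβ, rfl⟩
  · rw [sigma, dif_neg hfin, dif_pos hex]
    exact ⟨hex.choose_spec.1, hex.choose_spec.2⟩

section Play

variable (p : MBPlay Board)

lemma board_infinite : Board.Infinite := by
  apply Set.infinite_of_injective_forall_mem (f := fun k : ℕ => s(0, k + 1))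
  · intro a b hab
    simpa using Sym2.congr_right.mp hab
  · intro a
    rw [SimpleGraph.mem_edgeSet]
    simp

lemma lt_len (n : ℕ) : (n : Ordinal) < p.len := by
  by_contra hle
  push_neg at hle
  have hsub : Board ⊆ Set.range
      (fun k : Fin n => if h : ((k : ℕ) : Ordinal) < p.len then p.move _ h else s(0, 1)) := by
    intro e he
    obtain ⟨γ, hγ, hmove⟩ := p.complete e he
    obtain ⟨i, hi, rfl⟩ := lt_natCast_iff.mp (hγ.trans_le hle)
    refine ⟨⟨i, hi⟩, ?_⟩
    simp only
    rw [dif_pos hγ]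
    exact hmove
  exact board_infinite (Set.Finite.subset (Set.finite_range _) hsub)

/-- The sequence of moves of the play, restricted to the finite turns. -/
noncomputable def M (n : ℕ) : Sym2 ℕ := p.move n (lt_len p n)

lemma M_inj : Function.Injective (M p) := fun a b hab => by
  have := p.move_inj _ _ _ _ hab
  exact_mod_cast this

lemma M_mem (n : ℕ) : M p n ∈ Board := p.move_mem _ _

/-- The reversed history list of the first `n` moves. -/
noncomputable def hl : ℕ → List (Sym2 ℕ)
  | 0 => []
  | n + 1 => M p n :: hl n

lemma hl_length (n : ℕ) : (hl p n).length = n := by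
  induction n with
  | zero => rfl
  | succ n ih => simp [hl, ih]

lemma mem_hl {n : ℕ} {e : Sym2 ℕ} : e ∈ hl p n ↔ ∃ i, i < n ∧ M p i = e := by
  induction n with
  | zero => simp [hl]
  | succ n ih =>
    simp only [hl, List.mem_cons, ih]
    constructor
    · rintro (rfl | ⟨i, hi, he⟩)
      · exact ⟨n, Nat.lt_succ_self n, rfl⟩
      · exact ⟨i, Nat.lt_succ_of_lt hi, he⟩
    · rintro ⟨i, hi, he⟩
      rcases Nat.lt_succ_iff_lt_or_eq.mp hi with hi' | rfl
      · exact Or.inr ⟨i, hi', he⟩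
      · exact Or.inl he.symm

lemma toList_restrict (n : ℕ) (hlen : (n : Ordinal) < p.len) :
    ∀ k, k ≤ n →
      toList (n : Ordinal) (fun β hβ => p.move β (hβ.trans hlen)) k = hl p k := by
  intro k
  induction k with
  | zero => intro _; rfl
  | succ k ih =>
    intro hk
    rw [toList, dif_pos (Nat.cast_lt.mpr (by omega : k < n))]
    rw [ih (by omega)]
    rfl

lemma makerTurn_natCast {n : ℕ} (hn : n % 2 = 0) : makerTurn (n : Ordinal) := by
  show (n : Ordinal) % 2 = 0
  have : ((2 : ℕ) : Ordinal) = 2 := by norm_num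
  rw [← this, ← Ordinal.natCast_mod, hn]
  rfl

lemma follows_M (hf : p.Follows makerTurn sigma) (n : ℕ) (hn : n % 2 = 0) :
    M p n = moveList (hl p n) := by
  have h1 := hf (n : Ordinal) (lt_len p n) (makerTurn_natCast hn)
  rw [M, h1, sigma]
  have hfin : ∃ m : ℕ, (n : Ordinal) = (m : Ordinal) := ⟨n, rfl⟩
  rw [dif_pos hfin]
  have hch : hfin.choose = n := by
    have := hfin.choose_spec
    exact_mod_cast this.symm
  rw [hch, toList_restrict p n (lt_len p n) n le_rfl]

/-- Maker's state after the first `n` moves of the play. -/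
noncomputable def st (n : ℕ) : TS := stateAfter (hl p n)

lemma st_zero : st p 0 = initTS := rfl

lemma st_succ_even (n : ℕ) (hn : n % 2 = 0) :
    st p (n + 1) = (step (st p n) (hl p n)).2 := by
  show stateAfter (M p n :: hl p n) = _
  rw [stateAfter, if_pos (by rw [hl_length]; exact hn)]
  rfl

lemma st_succ_odd (n : ℕ) (hn : n % 2 = 1) : st p (n + 1) = st p n := by
  show stateAfter (M p n :: hl p n) = _
  rw [stateAfter, if_neg (by rw [hl_length]; omega)]
  rfl

lemma step_nil {t : TS} {h : List (Sym2 ℕ)} (hpos : t.pos = []) :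
    step t h = (s(t.cand, 0), { t with pos := [0], start := h.length }) := by
  rw [step, if_pos hpos]

lemma step_settle {t : TS} {h : List (Sym2 ℕ)} (hpos : t.pos ≠ []) (hav : avail t h = []) :
    step t h = (s(freshV h, 0),
      { settled := t.cand :: t.settled
        path := Function.update t.path t.cand t.pos
        cand := freshV h
        pos := [0]
        start := h.length }) := by
  rw [step, if_neg hpos, dif_pos hav]

lemma step_descend {t : TS} {h : List (Sym2 ℕ)} (hpos : t.pos ≠ []) (hav : avail t h ≠ []) :
    step t h = (s(t.cand, (avail t h).head hav),
      { t with pos := t.pos ++ [(avail t h).head hav] }) := by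
  rw [step, if_neg hpos, dif_neg hav]

lemma step_settle_fst {t : TS} {h : List (Sym2 ℕ)} (hpos : t.pos ≠ []) (hav : avail t h = []) :
    (step t h).1 = s(freshV h, 0) := by rw [step_settle hpos hav]

lemma step_settle_snd {t : TS} {h : List (Sym2 ℕ)} (hpos : t.pos ≠ []) (hav : avail t h = []) :
    (step t h).2 = { settled := t.cand :: t.settled
                     path := Function.update t.path t.cand t.pos
                     cand := freshV h
                     pos := [0]
                     start := h.length } := by rw [step_settle hpos hav]

lemma step_descend_fst {t : TS} {h : List (Sym2 ℕ)} (hpos : t.pos ≠ []) (hav : avail t h ≠ []) :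
    (step t h).1 = s(t.cand, (avail t h).head hav) := by rw [step_descend hpos hav]

lemma step_descend_snd {t : TS} {h : List (Sym2 ℕ)} (hpos : t.pos ≠ []) (hav : avail t h ≠ []) :
    (step t h).2 = { t with pos := t.pos ++ [(avail t h).head hav] } := by
  rw [step_descend hpos hav]

/-- The master invariant maintained by Maker's strategy. -/
structure InvS (Mv : ℕ → Sym2 ℕ) (n : ℕ) (t : TS) : Prop where
  hstart : t.start % 2 = 0
  hlen : (n = 0 ∧ t.pos = [] ∧ t.start = 0) ∨
    (t.pos ≠ [] ∧ (n + 1 = t.start + 2 * t.pos.length ∨ n = t.start + 2 * t.pos.length))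
  hwin : ∀ j (hj : j < t.pos.length),
    t.start + 2 * j < n ∧ Mv (t.start + 2 * j) = s(t.cand, t.pos[j])
  hfresh : ∀ i < t.start, t.cand ∉ Mv i
  hcpos : t.cand ∉ t.pos
  hc0 : t.cand ≠ 0
  hcset : t.cand ∉ t.settled
  hpnd : t.pos.Nodup
  hptree : ∀ j (hj : j < t.pos.length),
    (j = 0 → t.pos[j] = 0) ∧
    (j ≠ 0 → t.pos[j] ∈ t.settled ∧ t.path t.pos[j] = t.pos.take j)
  h0set : 0 ∉ t.settled
  hsnd : t.settled.Nodup
  hpath : ∀ v ∈ t.settled,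
    t.path v ≠ [] ∧ v ∉ t.path v ∧ (t.path v).Nodup ∧
    ∀ j (hj : j < (t.path v).length),
      (j = 0 → (t.path v)[j] = 0) ∧
      (j ≠ 0 → (t.path v)[j] ∈ t.settled ∧ t.path ((t.path v)[j]) = (t.path v).take j)
  hclaim : ∀ v ∈ t.settled, ∀ j (hj : j < (t.path v).length),
    ∃ i, i < n ∧ i % 2 = 0 ∧ Mv i = s(v, (t.path v)[j])
  hbr : ∀ q : List ℕ,
    (t.settled.filter (fun w => decide (t.path w = q))).length ≤ q.length + 1
  hun : ∀ v, v ∉ t.settled → t.path v = []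

lemma st_def (n : ℕ) : stateAfter (hl p n) = st p n := rfl

lemma inv_zero : InvS (M p) 0 (st p 0) := by
  rw [st_zero]
  refine ⟨rfl, Or.inl ⟨rfl, rfl, rfl⟩, ?_, ?_, ?_, ?_, ?_, ?_, ?_, ?_, ?_, ?_, ?_, ?_, ?_⟩ <;>
    simp [initTS]

lemma intended_spec (n : ℕ) (I : InvS (M p) n (st p n)) :
    (step (st p n) (hl p n)).1 ∈ Board ∧ (step (st p n) (hl p n)).1 ∉ hl p n := by
  by_cases hpos : (st p n).pos = []
  · rw [step_nil hpos]
    have hn0 : n = 0 := by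
      rcases I.hlen with ⟨h0, _, _⟩ | ⟨hne, _⟩
      · exact h0
      · exact absurd hpos hne
    subst hn0
    constructor
    · rw [SimpleGraph.mem_edgeSet]
      simpa using I.hc0
    · intro hmem
      simp [hl] at hmem
  · by_cases hav : avail (st p n) (hl p n) = []
    · rw [step_settle hpos hav]
      obtain ⟨hv0, hvfr⟩ := freshV_spec (hl p n)
      constructor
      · rw [SimpleGraph.mem_edgeSet]
        simp only [SimpleGraph.top_adj, ne_eq]
        omega
      · intro hmem
        exact hvfr _ hmem (Sym2.mem_mk_left _ _)
    · rw [step_descend hpos hav]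
      have hc := List.head_mem hav
      unfold avail at hc
      rw [List.mem_filter] at hc
      obtain ⟨hcset, hcprop⟩ := hc
      rw [decide_eq_true_eq] at hcprop
      constructor
      · rw [SimpleGraph.mem_edgeSet]
        simp only [SimpleGraph.top_adj, ne_eq]
        intro heq
        exact I.hcset (heq ▸ hcset)
      · exact hcprop.2

/-- The counting argument: when the candidate settles, the node it settles at
has at most `pos.length` children, because each of them was blocked by a
distinct Breaker move made during the candidate's descent. -/
lemma children_bound (n : ℕ) (I : InvS (M p) n (st p n))
    (hav : avail (st p n) (hl p n) = [])
    (hnn : n = (st p n).start + 2 * (st p n).pos.length) :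
    ((st p n).settled.filter (fun w => decide ((st p n).path w = (st p n).pos))).length
      ≤ (st p n).pos.length := by
  set t := st p n with ht
  set L := t.pos.length with hL
  have hblock : ∀ c ∈ t.settled, t.path c = t.pos → s(t.cand, c) ∈ hl p n := by
    intro c hc hpathc
    by_contra hmem
    have hcav : c ∈ avail t (hl p n) := by
      unfold avail
      rw [List.mem_filter, decide_eq_true_eq]
      exact ⟨hc, hpathc, hmem⟩
    rw [hav] at hcav
    simp at hcav
  set ch := t.settled.filter (fun w => decide (t.path w = t.pos)) with hch
  have hchnd : ch.Nodup := I.hsnd.filter _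
  have hchmem : ∀ c ∈ ch, c ∈ t.settled ∧ t.path c = t.pos := by
    intro c hc
    rw [hch, List.mem_filter, decide_eq_true_eq] at hc
    exact hc
  have hkey : ∀ c ∈ ch, ∃ k, k < L ∧ M p (t.start + 2 * k + 1) = s(t.cand, c) := by
    intro c hc
    obtain ⟨hcs, hcp⟩ := hchmem c hc
    obtain ⟨i, hi, hie⟩ := (mem_hl p).mp (hblock c hcs hcp)
    have hcande : t.cand ∈ M p i := by rw [hie]; exact Sym2.mem_mk_left _ _
    have hstartle : t.start ≤ i := by
      by_contra hlt
      exact I.hfresh i (by omega) hcande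
    have hiodd : (i - t.start) % 2 = 1 := by
      by_contra heven
      have h2 : (i - t.start) % 2 = 0 := by omega
      have hij : i = t.start + 2 * ((i - t.start) / 2) := by omega
      have hjL : (i - t.start) / 2 < L := by omega
      have hwin := (I.hwin ((i - t.start) / 2) hjL).2
      rw [← hij, hie] at hwin
      have hceq : c = t.pos[(i - t.start) / 2] := Sym2.congr_right.mp hwin
      rcases Nat.eq_zero_or_pos ((i - t.start) / 2) with hj0 | hj0
      · have h00 := (I.hptree _ hjL).1 hj0
        rw [← hceq] at h00
        exact I.h0set (h00 ▸ hcs)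
      · have h2' := (I.hptree _ hjL).2 (by omega)
        rw [← hceq] at h2'
        have hpp : t.pos = t.pos.take ((i - t.start) / 2) := hcp.symm.trans h2'.2
        have hlen := congrArg List.length hpp
        rw [List.length_take] at hlen
        omega
    refine ⟨(i - t.start) / 2, by omega, ?_⟩
    have hii : t.start + 2 * ((i - t.start) / 2) + 1 = i := by omega
    rw [hii, hie]
  let kOf : ℕ → ℕ := fun c =>
    if hc : ∃ k, k < L ∧ M p (t.start + 2 * k + 1) = s(t.cand, c) then hc.choose else 0
  have hkOf : ∀ c ∈ ch, kOf c < L ∧ M p (t.start + 2 * (kOf c) + 1) = s(t.cand, c) := by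
    intro c hc
    have h := hkey c hc
    simp only [kOf, dif_pos h]
    exact h.choose_spec
  have hcard : ch.toFinset.card ≤ (Finset.range L).card := by
    apply Finset.card_le_card_of_injOn kOf
    · intro c hc
      rw [Finset.mem_coe, List.mem_toFinset] at hc
      exact Finset.mem_range.mpr (hkOf c hc).1
    · intro c hc c' hc' hkk
      rw [Finset.mem_coe, List.mem_toFinset] at hc hc'
      have h1 := (hkOf c hc).2
      have h2 := (hkOf c' hc').2
      rw [hkk] at h1
      exact Sym2.congr_right.mp (h1.symm.trans h2)
  rw [List.toFinset_card_of_nodup hchnd, Finset.card_range] at hcard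
  exact hcard

lemma inv_succ (hf : p.Follows makerTurn sigma) (n : ℕ) (I : InvS (M p) n (st p n)) :
    InvS (M p) (n + 1) (st p (n + 1)) := by
  by_cases hn : n % 2 = 0
  swap
  · -- odd turn: Breaker moved, state unchanged
    rw [st_succ_odd p n (by omega)]
    refine ⟨I.hstart, ?_, fun j hj => ⟨(I.hwin j hj).1.trans (Nat.lt_succ_self n),
      (I.hwin j hj).2⟩, I.hfresh, I.hcpos, I.hc0, I.hcset, I.hpnd, I.hptree, I.h0set,
      I.hsnd, I.hpath, ?_, I.hbr, I.hun⟩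
    · rcases I.hlen with ⟨h0, _, _⟩ | ⟨hne, h2⟩
      · omega
      · have hst := I.hstart
        refine Or.inr ⟨hne, Or.inr ?_⟩
        rcases h2 with h2 | h2
        · exact h2
        · exfalso; omega
    · intro v hv j hj
      obtain ⟨i, h1, h2, h3⟩ := I.hclaim v hv j hj
      exact ⟨i, by omega, h2, h3⟩
  · -- even turn: Maker moved according to the strategy
    have hspec := intended_spec p n I
    have hMeq : M p n = (step (st p n) (hl p n)).1 := by
      rw [follows_M p hf n hn]
      unfold moveList
      rw [st_def]
      rw [if_pos hspec]
    rw [st_succ_even p n hn]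
    by_cases hpos : (st p n).pos = []
    · -- initial move (only at n = 0)
      have hn0 : n = 0 := by
        rcases I.hlen with ⟨h0, _, _⟩ | ⟨hne, _⟩
        · exact h0
        · exact absurd hpos hne
      subst hn0
      have hM0 : M p 0 = s(1, 0) := hMeq
      show InvS (M p) (0 + 1) (⟨[], fun _ => [], 1, [0], 0⟩ : TS)
      refine ⟨rfl, Or.inr ⟨by simp, Or.inl rfl⟩, ?_, ?_, ?_, ?_, ?_, ?_, ?_, ?_, ?_, ?_,
        ?_, ?_, ?_⟩
      · intro j hj
        simp only [List.length_cons, List.length_nil] at hj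
        interval_cases j
        exact ⟨Nat.zero_lt_one, hM0⟩
      · intro i hi
        dsimp only at hi
        exact absurd hi (by omega)
      · simp
      · simp
      · simp
      · simp
      · intro j hj
        simp only [List.length_cons, List.length_nil] at hj
        interval_cases j
        exact ⟨fun _ => rfl, fun h => absurd rfl h⟩
      · simp
      · simp
      · intro v hv
        simp at hv
      · intro v hv
        simp at hv
      · intro q
        simp
      · intro v _
        rfl
    · have hnL : n = (st p n).start + 2 * (st p n).pos.length := by
        rcases I.hlen with ⟨h0, hp, _⟩ | ⟨_, h2 | h2⟩
        · exact absurd hp hpos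
        · exfalso; have := I.hstart; omega
        · exact h2
      have hLpos : 0 < (st p n).pos.length := List.length_pos_iff.mpr hpos
      by_cases hav : avail (st p n) (hl p n) = []
      · -- the candidate settles, a fresh candidate starts at the root
        have hbound := children_bound p n I hav hnL
        rw [step_settle_snd hpos hav, hl_length]
        rw [step_settle_fst hpos hav] at hMeq
        obtain ⟨hv0, hvfr⟩ := freshV_spec (hl p n)
        obtain ⟨v', hv'⟩ : ∃ v, freshV (hl p n) = v := ⟨_, rfl⟩
        rw [hv'] at hMeq hv0 hvfr ⊢
        obtain ⟨t, ht⟩ : ∃ u, st p n = u := ⟨_, rfl⟩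
        rw [ht] at I hpos hnL hLpos hav hbound ⊢
        have hvfreshM : ∀ i < n, v' ∉ M p i := fun i hi hmem =>
          hvfr _ ((mem_hl p).mpr ⟨i, hi, rfl⟩) hmem
        have hstartlt : t.start < n := by omega
        have hcandM : t.cand ∈ M p t.start := by
          have hw := (I.hwin 0 hLpos).2
          rw [Nat.mul_zero, Nat.add_zero] at hw
          rw [hw]
          exact Sym2.mem_mk_left _ _
        have hvc : v' ≠ t.cand := fun he => hvfreshM t.start hstartlt (he ▸ hcandM)
        have hvset : ∀ w ∈ t.settled, v' ≠ w := by
          intro w hw he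
          obtain ⟨hpne, -, -, -⟩ := I.hpath w hw
          have hlen0 : 0 < (t.path w).length := List.length_pos_iff.mpr hpne
          obtain ⟨i, hi, -, hie⟩ := I.hclaim w hw 0 hlen0
          apply hvfreshM i hi
          rw [hie, he]
          exact Sym2.mem_mk_left _ _
        have hposnc : ∀ u ∈ t.pos, u ≠ t.cand := fun u hu he => I.hcpos (he ▸ hu)
        have hsetnc : ∀ w ∈ t.settled, w ≠ t.cand := fun w hw he => I.hcset (he ▸ hw)
        have hlen' : n + 1 + 1 = n + 2 * ([0] : List ℕ).length ∨ n + 1 = n + 2 * ([0] : List ℕ).length :=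
          Or.inl (by simp only [List.length_cons, List.length_nil])
        refine ⟨hn, Or.inr ⟨by simp, hlen'⟩, ?_, ?_, ?_, ?_, ?_, ?_, ?_,
          ?_, ?_, ?_, ?_, ?_, ?_⟩
        · -- hwin
          intro j hj
          dsimp only at hj ⊢
          simp only [List.length_cons, List.length_nil] at hj
          interval_cases j
          refine ⟨by omega, ?_⟩
          rw [show n + 2 * 0 = n by omega, hMeq]
          rfl
        · -- hfresh
          intro i hi
          dsimp only at hi ⊢
          exact hvfreshM i hi
        · -- hcpos
          dsimp only
          simp only [List.mem_cons, List.not_mem_nil, or_false]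
          omega
        · -- hc0
          dsimp only
          omega
        · -- hcset
          dsimp only
          simp only [List.mem_cons]
          rintro (he | hw)
          · exact hvc he
          · exact hvset _ hw rfl
        · -- hpnd
          simp
        · -- hptree
          intro j hj
          dsimp only at hj ⊢
          simp only [List.length_cons, List.length_nil] at hj
          interval_cases j
          exact ⟨fun _ => rfl, fun h => absurd rfl h⟩
        · -- h0set
          dsimp only
          simp only [List.mem_cons]
          rintro (he | hw)
          · exact I.hc0 he.symm
          · exact I.h0set hw
        · -- hsnd
          exact List.nodup_cons.mpr ⟨I.hcset, I.hsnd⟩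
        · -- hpath
          intro v hv
          dsimp only at hv ⊢
          have hupd : Function.update t.path t.cand t.pos t.cand = t.pos :=
            Function.update_self _ _ _
          rcases List.mem_cons.mp hv with rfl | hv
          · rw [hupd]
            refine ⟨hpos, I.hcpos, I.hpnd, ?_⟩
            intro j hj
            refine ⟨(I.hptree j hj).1, fun hj0 => ?_⟩
            obtain ⟨h1, h2⟩ := (I.hptree j hj).2 hj0
            refine ⟨List.mem_cons_of_mem _ h1, ?_⟩
            rw [Function.update_of_ne (hposnc _ (List.getElem_mem hj) )]
            exact h2
          · rw [Function.update_of_ne (hsetnc v hv)]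
            obtain ⟨h1, h2, h3, h4⟩ := I.hpath v hv
            refine ⟨h1, h2, h3, ?_⟩
            intro j hj
            refine ⟨(h4 j hj).1, fun hj0 => ?_⟩
            obtain ⟨h5, h6⟩ := (h4 j hj).2 hj0
            refine ⟨List.mem_cons_of_mem _ h5, ?_⟩
            rw [Function.update_of_ne (hsetnc _ h5)]
            exact h6
        · -- hclaim
          intro v hv j hj
          dsimp only at hv hj ⊢
          have hupd : Function.update t.path t.cand t.pos t.cand = t.pos :=
            Function.update_self _ _ _
          rcases List.mem_cons.mp hv with rfl | hv
          · simp only [hupd] at hj ⊢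
            refine ⟨t.start + 2 * j, by have := (I.hwin j hj).1; omega,
              by have := I.hstart; omega, ?_⟩
            exact (I.hwin j hj).2
          · have hupd2 : Function.update t.path t.cand t.pos v = t.path v :=
              Function.update_of_ne (hsetnc v hv) _ _
            simp only [hupd2] at hj ⊢
            obtain ⟨i, h1, h2, h3⟩ := I.hclaim v hv j hj
            exact ⟨i, by omega, h2, h3⟩
        · -- hbr
          intro q
          dsimp only
          have hcongr : ∀ w ∈ t.settled,
              (decide (Function.update t.path t.cand t.pos w = q)) = decide (t.path w = q) := by
            intro w hw
            rw [Function.update_of_ne (hsetnc w hw)]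
          rw [List.filter_cons]
          rw [List.filter_congr hcongr]
          by_cases hq : t.pos = q
          · subst hq
            simp only [Function.update_self]
            simp only [decide_true, if_true, List.length_cons]
            omega
          · have : (decide (Function.update t.path t.cand t.pos t.cand = q)) = false := by
              rw [Function.update_self]
              simpa using hq
            rw [this]
            simp only [Bool.false_eq_true, if_false]
            exact I.hbr q
        · -- hun
          intro v hv
          dsimp only at hv ⊢
          simp only [List.mem_cons, not_or] at hv
          rw [Function.update_of_ne hv.1]
          exact I.hun v hv.2
      · -- the candidate descends to an available child
        have hcmem := List.head_mem hav
        rw [step_descend_snd hpos hav]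
        rw [step_descend_fst hpos hav] at hMeq
        obtain ⟨c, hc⟩ : ∃ c, (avail (st p n) (hl p n)).head hav = c := ⟨_, rfl⟩
        rw [hc] at hcmem hMeq ⊢
        unfold avail at hcmem
        rw [List.mem_filter, decide_eq_true_eq] at hcmem
        obtain ⟨t, ht⟩ : ∃ u, st p n = u := ⟨_, rfl⟩
        rw [ht] at I hpos hnL hLpos hMeq hcmem ⊢
        obtain ⟨hcs, hcpath, hcfresh⟩ := hcmem
        have hcnotpos : c ∉ t.pos := by
          intro hcp
          obtain ⟨j, hj, hje⟩ := List.mem_iff_getElem.mp hcp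
          rcases Nat.eq_zero_or_pos j with hj0 | hj0
          · have h00 := (I.hptree j hj).1 hj0
            rw [hje] at h00
            exact I.h0set (h00 ▸ hcs)
          · have h2 := (I.hptree j hj).2 (by omega)
            rw [hje] at h2
            have hpp : t.pos = t.pos.take j := hcpath.symm.trans h2.2
            have hlen := congrArg List.length hpp
            rw [List.length_take] at hlen
            omega
        have hccand : t.cand ≠ c := fun he => I.hcset (he ▸ hcs)
        refine ⟨I.hstart,
          Or.inr ⟨by simp, Or.inl (by dsimp only; simp only [List.length_append,
            List.length_cons, List.length_nil]; omega)⟩,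
          ?_, I.hfresh, ?_, I.hc0, I.hcset, ?_, ?_, I.h0set, I.hsnd, I.hpath, ?_, I.hbr,
          I.hun⟩
        · -- hwin
          intro j hj
          dsimp only at hj ⊢
          simp only [List.length_append, List.length_cons, List.length_nil] at hj
          rcases Nat.lt_succ_iff_lt_or_eq.mp hj with hjL | hjL
          · refine ⟨(I.hwin j hjL).1.trans (Nat.lt_succ_self n), ?_⟩
            rw [List.getElem_append_left hjL]
            exact (I.hwin j hjL).2
          · subst hjL
            refine ⟨by omega, ?_⟩
            rw [List.getElem_concat_length rfl]
            rw [show t.start + 2 * t.pos.length = n by omega]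
            exact hMeq
        · -- hcpos
          dsimp only
          simp only [List.mem_append, List.mem_cons, List.not_mem_nil, or_false]
          rintro (h | h)
          · exact I.hcpos h
          · exact hccand h
        · -- hpnd
          dsimp only
          rw [List.nodup_append]
          refine ⟨I.hpnd, by simp, ?_⟩
          intro a ha b hb hab
          simp only [List.mem_cons, List.not_mem_nil, or_false] at hb
          subst hb
          exact hcnotpos (hab ▸ ha)
        · -- hptree
          intro j hj
          dsimp only at hj ⊢
          simp only [List.length_append, List.length_cons, List.length_nil] at hj
          rcases Nat.lt_succ_iff_lt_or_eq.mp hj with hjL | hjL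
          · refine ⟨fun hj0 => ?_, fun hj0 => ?_⟩
            · rw [List.getElem_append_left hjL]
              exact (I.hptree j hjL).1 hj0
            · rw [List.getElem_append_left hjL,
                List.take_append_of_le_length (le_of_lt hjL)]
              exact (I.hptree j hjL).2 hj0
          · subst hjL
            refine ⟨fun hj0 => by omega, fun _ => ?_⟩
            rw [List.getElem_concat_length rfl]
            refine ⟨hcs, ?_⟩
            rw [List.take_left]
            exact hcpath
        · -- hclaim
          intro v hv j hj
          dsimp only at hv hj ⊢
          obtain ⟨i, h1, h2, h3⟩ := I.hclaim v hv j hj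
          exact ⟨i, by omega, h2, h3⟩

lemma inv (hf : p.Follows makerTurn sigma) : ∀ n, InvS (M p) n (st p n)
  | 0 => inv_zero p
  | n + 1 => inv_succ p hf n (inv hf n)

lemma step_nil_snd {t : TS} {h : List (Sym2 ℕ)} (hpos : t.pos = []) :
    (step t h).2 = { t with pos := [0], start := h.length } := by rw [step_nil hpos]

/-- What can happen to the `settled` list and the `pos` list in one step. -/
lemma step_analysis (hf : p.Follows makerTurn sigma) (n : ℕ) :
    ((st p (n + 1)).settled = (st p n).settled ∧
      (∀ v, (st p (n + 1)).path v = (st p n).path v) ∧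
      (n % 2 = 0 → (st p n).pos ≠ [] →
        (st p (n + 1)).pos.length = (st p n).pos.length + 1)) ∨
    ((st p (n + 1)).settled = (st p n).cand :: (st p n).settled ∧
      ∀ v ∈ (st p n).settled, (st p (n + 1)).path v = (st p n).path v) := by
  by_cases hn : n % 2 = 0
  · rw [st_succ_even p n hn]
    by_cases hpos : (st p n).pos = []
    · rw [step_nil_snd hpos]
      exact Or.inl ⟨rfl, fun v => rfl, fun _ hne => absurd hpos hne⟩
    · by_cases hav : avail (st p n) (hl p n) = []
      · rw [step_settle_snd hpos hav]
        refine Or.inr ⟨rfl, fun v hv => ?_⟩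
        have hne : v ≠ (st p n).cand := fun he => (inv p hf n).hcset (he ▸ hv)
        exact Function.update_of_ne hne _ _
      · rw [step_descend_snd hpos hav]
        refine Or.inl ⟨rfl, fun v => rfl, fun _ _ => ?_⟩
        simp [List.length_append]
  · rw [st_succ_odd p n (by omega)]
    exact Or.inl ⟨rfl, fun v => rfl, fun h _ => absurd h hn⟩

lemma settled_persist_one (hf : p.Follows makerTurn sigma) (n : ℕ) :
    ∀ v ∈ (st p n).settled,
      v ∈ (st p (n + 1)).settled ∧ (st p (n + 1)).path v = (st p n).path v := by
  rcases step_analysis p hf n with ⟨hs, hp, -⟩ | ⟨hs, hp⟩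
  · exact fun v hv => ⟨by rw [hs]; exact hv, hp v⟩
  · exact fun v hv => ⟨by rw [hs]; exact List.mem_cons_of_mem _ hv, hp v hv⟩

lemma settled_persist (hf : p.Follows makerTurn sigma) {n m : ℕ} (hnm : n ≤ m) :
    ∀ v ∈ (st p n).settled,
      v ∈ (st p m).settled ∧ (st p m).path v = (st p n).path v := by
  induction m, hnm using Nat.le_induction with
  | base => exact fun v hv => ⟨hv, rfl⟩
  | succ m hnm ih =>
    intro v hv
    obtain ⟨h1, h2⟩ := ih v hv
    obtain ⟨h3, h4⟩ := settled_persist_one p hf m v h1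
    exact ⟨h3, h4.trans h2⟩

lemma settled_len_mono (hf : p.Follows makerTurn sigma) {n m : ℕ} (hnm : n ≤ m) :
    (st p n).settled.length ≤ (st p m).settled.length := by
  induction m, hnm using Nat.le_induction with
  | base => exact le_rfl
  | succ m hnm ih =>
    refine le_trans ih ?_
    rcases step_analysis p hf m with ⟨hs, -, -⟩ | ⟨hs, -⟩
    · rw [hs]
    · rw [hs, List.length_cons]
      omega

lemma pos_le (hf : p.Follows makerTurn sigma) (n : ℕ) :
    (st p n).pos.length ≤ (st p n).settled.length + 1 := by
  have I := inv p hf n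
  have hsub : (st p n).pos.toFinset ⊆ insert 0 (st p n).settled.toFinset := by
    intro u hu
    rw [List.mem_toFinset] at hu
    obtain ⟨j, hj, hje⟩ := List.mem_iff_getElem.mp hu
    rcases Nat.eq_zero_or_pos j with hj0 | hj0
    · rw [← hje, (I.hptree j hj).1 hj0]
      exact Finset.mem_insert_self _ _
    · refine Finset.mem_insert_of_mem ?_
      rw [List.mem_toFinset, ← hje]
      exact ((I.hptree j hj).2 (by omega)).1
  calc (st p n).pos.length = (st p n).pos.toFinset.card :=
        (List.toFinset_card_of_nodup I.hpnd).symm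
    _ ≤ (insert 0 (st p n).settled.toFinset).card := Finset.card_le_card hsub
    _ ≤ (st p n).settled.toFinset.card + 1 := Finset.card_insert_le _ _
    _ ≤ (st p n).settled.length + 1 := by
        have := List.toFinset_card_le (st p n).settled
        omega

lemma settle_soon (hf : p.Follows makerTurn sigma) (n : ℕ) :
    ∃ m, (st p n).settled.length < (st p m).settled.length := by
  by_contra hcon
  push_neg at hcon
  have heq : ∀ m, n ≤ m → (st p m).settled.length = (st p n).settled.length :=
    fun m hm => le_antisymm (hcon m) (settled_len_mono p hf hm)
  -- from an even turn `≥ max n 2` on, `pos` grows at every even turn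
  set m0 := 2 * (n / 2 + 1) with hm0
  have hm0even : m0 % 2 = 0 := by omega
  have hm0n : n ≤ m0 := by omega
  have hgrow : ∀ k, k ≤ (st p (m0 + 2 * k)).pos.length := by
    intro k
    induction k with
    | zero => omega
    | succ k ih =>
      have hev : (m0 + 2 * k) % 2 = 0 := by omega
      have hne : (st p (m0 + 2 * k)).pos ≠ [] := by
        intro hnil
        rcases (inv p hf (m0 + 2 * k)).hlen with ⟨h0, -, -⟩ | ⟨hne', -⟩
        · omega
        · exact hne' hnil
      rcases step_analysis p hf (m0 + 2 * k) with ⟨-, -, hp⟩ | ⟨hs, -⟩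
      · have h1 := hp hev hne
        have hodd : (m0 + 2 * k + 1) % 2 = 1 := by omega
        have h2 : st p (m0 + 2 * k + 2) = st p (m0 + 2 * k + 1) :=
          st_succ_odd p _ (by omega)
        have : m0 + 2 * (k + 1) = m0 + 2 * k + 1 + 1 := by omega
        rw [this, h2, h1]
        omega
      · exfalso
        have h1 := heq (m0 + 2 * k) (by omega)
        have h2 := heq (m0 + 2 * k + 1) (by omega)
        rw [hs, List.length_cons] at h2
        omega
  have hbig := hgrow ((st p n).settled.length + 3)
  have hb2 := pos_le p hf (m0 + 2 * ((st p n).settled.length + 3))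
  have hb3 := heq (m0 + 2 * ((st p n).settled.length + 3)) (by omega)
  omega

lemma settled_unbounded (hf : p.Follows makerTurn sigma) (N : ℕ) :
    ∃ n, N ≤ (st p n).settled.length := by
  induction N with
  | zero => exact ⟨0, by omega⟩
  | succ N ih =>
    obtain ⟨n, hn⟩ := ih
    obtain ⟨m, hm⟩ := settle_soon p hf n
    exact ⟨m, by omega⟩

/-- The set of vertices that eventually settle. -/
def SInf : Set ℕ := {v | ∃ n, v ∈ (st p n).settled}

/-- The final path (list of strict ancestors) of a settled vertex. -/
noncomputable def pInf (v : ℕ) : List ℕ :=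
  if h : ∃ n, v ∈ (st p n).settled then (st p h.choose).path v else []

lemma pInf_eq (hf : p.Follows makerTurn sigma) {n : ℕ} {v : ℕ}
    (hv : v ∈ (st p n).settled) : pInf p v = (st p n).path v := by
  have hex : ∃ m, v ∈ (st p m).settled := ⟨n, hv⟩
  rw [pInf, dif_pos hex]
  have h1 := settled_persist p hf (le_max_left hex.choose n) v hex.choose_spec
  have h2 := settled_persist p hf (le_max_right hex.choose n) v hv
  rw [← h1.2, h2.2]

lemma sInf_infinite (hf : p.Follows makerTurn sigma) : (SInf p).Infinite := by
  intro hfin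
  obtain ⟨n, hn⟩ := settled_unbounded p hf (hfin.toFinset.card + 1)
  have hsub : (st p n).settled.toFinset ⊆ hfin.toFinset := by
    intro v hv
    rw [List.mem_toFinset] at hv
    rw [Set.Finite.mem_toFinset]
    exact ⟨n, hv⟩
  have hcard := Finset.card_le_card hsub
  rw [List.toFinset_card_of_nodup (inv p hf n).hsnd] at hcard
  omega

lemma pInf_facts (hf : p.Follows makerTurn sigma) {v : ℕ} (hv : v ∈ SInf p) :
    pInf p v ≠ [] ∧ v ∉ pInf p v ∧ (pInf p v).Nodup ∧
    (∀ j (hj : j < (pInf p v).length),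
      (j = 0 → (pInf p v)[j] = 0) ∧
      (j ≠ 0 → (pInf p v)[j] ∈ SInf p ∧ pInf p ((pInf p v)[j]) = (pInf p v).take j)) ∧
    ∀ j (hj : j < (pInf p v).length),
      ∃ i, i % 2 = 0 ∧ M p i = s(v, (pInf p v)[j]) := by
  obtain ⟨n, hv⟩ := hv
  have I := inv p hf n
  have hpe := pInf_eq p hf hv
  obtain ⟨h1, h2, h3, h4⟩ := I.hpath v hv
  rw [hpe]
  refine ⟨h1, h2, h3, ?_, ?_⟩
  · intro j hj
    refine ⟨(h4 j hj).1, fun hj0 => ?_⟩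
    obtain ⟨h5, h6⟩ := (h4 j hj).2 hj0
    exact ⟨⟨n, h5⟩, by rw [pInf_eq p hf h5]; exact h6⟩
  · intro j hj
    obtain ⟨i, -, h7, h8⟩ := I.hclaim v hv j hj
    exact ⟨i, h7, h8⟩

lemma pInf_zero (hf : p.Follows makerTurn sigma) : pInf p 0 = [] := by
  rw [pInf, dif_neg]
  rintro ⟨n, hn⟩
  exact (inv p hf n).h0set hn

lemma children_finite (hf : p.Follows makerTurn sigma) (q : List ℕ) :
    {w | w ∈ SInf p ∧ pInf p w = q}.Finite := by
  by_contra hinf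
  replace hinf : {w | w ∈ SInf p ∧ pInf p w = q}.Infinite := hinf
  obtain ⟨tset, hsub, hfin, hcard⟩ := hinf.exists_subset_ncard_eq (q.length + 2)
  classical
  have htime : ∀ w ∈ tset, ∃ n, w ∈ (st p n).settled := fun w hw => (hsub hw).1
  set timeOf : ℕ → ℕ := fun w =>
    if h : ∃ n, w ∈ (st p n).settled then h.choose else 0 with htimeOf
  have htm : ∀ w ∈ tset, w ∈ (st p (timeOf w)).settled := by
    intro w hw
    have h := htime w hw
    simp only [timeOf, dif_pos h]
    exact h.choose_spec
  obtain ⟨N, hN⟩ := (hfin.image timeOf).bddAbove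
  have hmem : ∀ w ∈ tset, w ∈ (st p N).settled ∧ (st p N).path w = q := by
    intro w hw
    have hle : timeOf w ≤ N := hN (Set.mem_image_of_mem _ hw)
    obtain ⟨hm, hp⟩ := settled_persist p hf hle w (htm w hw)
    refine ⟨hm, ?_⟩
    rw [← pInf_eq p hf hm]
    exact (hsub hw).2
  have hsub2 : tset ⊆
      ↑((st p N).settled.filter (fun w => decide ((st p N).path w = q))).toFinset := by
    intro w hw
    rw [Finset.mem_coe, List.mem_toFinset, List.mem_filter, decide_eq_true_eq]
    exact ⟨(hmem w hw).1, (hmem w hw).2⟩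
  have hle2 := Set.ncard_le_ncard hsub2 (Set.finite_coe_iff.mp ?_ )
  · rw [hcard, Set.ncard_coe_finset] at hle2
    have hle3 := List.toFinset_card_le
      ((st p N).settled.filter (fun w => decide ((st p N).path w = q)))
    have hle4 := (inv p hf N).hbr q
    omega
  · exact Finite.of_fintype _

/-- The chain of a vertex: its ancestors followed by itself. -/
noncomputable def chain (v : ℕ) : List ℕ := pInf p v ++ [v]

/-- The descendants of a vertex in the limit tree. -/
noncomputable def desc (x : ℕ) : Set ℕ := {v | v ∈ SInf p ∧ chain p x <+: chain p v}

lemma desc_zero (hf : p.Follows makerTurn sigma) : SInf p ⊆ desc p 0 := by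
  intro v hv
  refine ⟨hv, ?_⟩
  obtain ⟨h1, -, -, h4, -⟩ := pInf_facts p hf hv
  have hlen : 0 < (pInf p v).length := List.length_pos_iff.mpr h1
  have h0 : (pInf p v)[0] = 0 := (h4 0 hlen).1 rfl
  have hhead : (pInf p v).head h1 = 0 := by
    rw [← List.getElem_zero hlen]
    exact h0
  have hcons : pInf p v = 0 :: (pInf p v).tail := by
    conv_lhs => rw [← List.cons_head_tail h1]
    rw [hhead]
  show chain p 0 <+: chain p v
  rw [chain, chain, pInf_zero p hf, hcons]
  exact ⟨(pInf p v).tail ++ [v], by simp⟩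

lemma desc_step (hf : p.Follows makerTurn sigma) {x : ℕ} (hx : (desc p x).Infinite) :
    ∃ w, w ∈ SInf p ∧ pInf p w = chain p x ∧ (desc p w).Infinite := by
  have hcover : desc p x ⊆
      {x} ∪ ⋃ w ∈ {w | w ∈ SInf p ∧ pInf p w = chain p x}, desc p w := by
    intro v hv
    obtain ⟨hvS, hpre⟩ := hv
    by_cases hvx : v = x
    · exact Or.inl (by simp [hvx])
    · right
      have hk0 : 0 < (chain p x).length := by rw [chain]; simp
      have hlenle : (chain p x).length ≤ (chain p v).length := hpre.length_le
      have hlv : (chain p v).length = (pInf p v).length + 1 := by rw [chain]; simp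
      have htake : chain p x = (chain p v).take (chain p x).length := by
        rw [List.prefix_iff_eq_take] at hpre
        exact hpre
      rcases Nat.lt_or_ge (pInf p v).length (chain p x).length with hcase | hcase
      · -- chain p x = chain p v, so v = x: contradiction
        exfalso
        have hkeq : (chain p x).length = (chain p v).length := by omega
        have hchain : chain p x = chain p v := by
          rw [htake, hkeq, List.take_length]
        have hplen : (pInf p x).length = (pInf p v).length := by
          have := congrArg List.length hchain
          rw [chain, chain] at this
          simp at this
          omega
        rw [chain, chain] at hchain
        obtain ⟨-, h2⟩ := List.append_inj hchain hplen
        exact hvx (by simpa using h2.symm)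
      · -- the element of `pInf v` at position `(chain x).length` is the child
        have htake2 : chain p x = (pInf p v).take (chain p x).length := by
          have hcv : chain p v = pInf p v ++ [v] := rfl
          rw [hcv, List.take_append_of_le_length hcase] at htake
          exact htake
        rcases Nat.lt_or_ge (chain p x).length (pInf p v).length with hcase2 | hcase2
        · -- proper child
          obtain ⟨-, -, -, h4, -⟩ := pInf_facts p hf hvS
          obtain ⟨hw1, hw2⟩ := (h4 (chain p x).length hcase2).2 (by omega)
          refine Set.mem_biUnion (show _ ∈ {w | w ∈ SInf p ∧ pInf p w = chain p x} from
            ⟨hw1, hw2.trans htake2.symm⟩) ?_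
          refine ⟨hvS, ?_⟩
          show pInf p ((pInf p v)[(chain p x).length]) ++ [(pInf p v)[(chain p x).length]]
            <+: pInf p v ++ [v]
          rw [hw2]
          have hconc := List.take_concat_get hcase2
          rw [List.concat_eq_append] at hconc
          rw [hconc]
          exact (List.take_prefix _ _).trans (List.prefix_append _ _)
        · -- v itself is a child
          have hveq : pInf p v = chain p x := by
            rw [htake2, show (chain p x).length = (pInf p v).length by omega,
              List.take_length]
          refine Set.mem_biUnion (show v ∈ {w | w ∈ SInf p ∧ pInf p w = chain p x} from
            ⟨hvS, hveq⟩) ?_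
          exact ⟨hvS, List.prefix_refl _⟩
  by_contra hno
  push_neg at hno
  have hfin : ({x} ∪ ⋃ w ∈ {w | w ∈ SInf p ∧ pInf p w = chain p x}, desc p w).Finite := by
    refine (Set.finite_singleton x).union ?_
    refine Set.Finite.biUnion (children_finite p hf (chain p x)) ?_
    intro w hw
    exact hno w hw.1 hw.2
  exact hx (hfin.subset hcover)

/-- The infinite branch of the limit tree, constructed recursively. -/
noncomputable def branchRec (hf : p.Follows makerTurn sigma) : ℕ → {x : ℕ // (desc p x).Infinite}
  | 0 => ⟨0, ((sInf_infinite p hf).mono (desc_zero p hf))⟩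
  | n + 1 => ⟨(desc_step p hf (branchRec hf n).2).choose,
      (desc_step p hf (branchRec hf n).2).choose_spec.2.2⟩

lemma branch_spec (hf : p.Follows makerTurn sigma) (n : ℕ) :
    (branchRec p hf (n + 1)).1 ∈ SInf p ∧
      pInf p (branchRec p hf (n + 1)).1 = chain p (branchRec p hf n).1 := by
  have h := (desc_step p hf (branchRec p hf n).2).choose_spec
  exact ⟨h.1, h.2.1⟩

lemma branch_mem (hf : p.Follows makerTurn sigma) {m n : ℕ} (hmn : m < n) :
    (branchRec p hf m).1 ∈ pInf p (branchRec p hf n).1 := by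
  induction n with
  | zero => omega
  | succ n ih =>
    rw [(branch_spec p hf n).2, chain, List.mem_append]
    rcases Nat.lt_succ_iff_lt_or_eq.mp hmn with h | h
    · exact Or.inl (ih h)
    · subst h
      simp

lemma branch_adj (hf : p.Follows makerTurn sigma) {m n : ℕ} (hmn : m < n) :
    ∃ i, i % 2 = 0 ∧ M p i = s((branchRec p hf n).1, (branchRec p hf m).1) := by
  obtain ⟨n, rfl⟩ : ∃ k, k + 1 = n := ⟨n - 1, by omega⟩
  have hS := (branch_spec p hf n).1
  obtain ⟨-, -, -, -, h5⟩ := pInf_facts p hf hS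
  obtain ⟨j, hj, hje⟩ := List.mem_iff_getElem.mp (branch_mem p hf hmn)
  obtain ⟨i, h1, h2⟩ := h5 j hj
  exact ⟨i, h1, by rw [h2, hje]⟩

lemma branch_ne (hf : p.Follows makerTurn sigma) {m n : ℕ} (hmn : m < n) :
    (branchRec p hf m).1 ≠ (branchRec p hf n).1 := by
  obtain ⟨k, rfl⟩ : ∃ k, k + 1 = n := ⟨n - 1, by omega⟩
  have hS := (branch_spec p hf k).1
  obtain ⟨-, h2, -, -, -⟩ := pInf_facts p hf hS
  intro he
  have hm := branch_mem p hf hmn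
  rw [he] at hm
  exact h2 hm

lemma claimed_of_even {i : ℕ} (hi : i % 2 = 0) :
    M p i ∈ p.claimed makerTurn :=
  ⟨(i : Ordinal), lt_len p i, makerTurn_natCast hi, rfl⟩

end Play

end KOmegaAux

/-- Maker has a winning strategy in the Maker–Breaker game
`MB(K_ω, K_ω)` on the countably infinite complete graph, where her goal is to
build a copy of the countably infinite complete graph. -/
theorem makerWins_complete_omega :
    MakerWins (⊤ : SimpleGraph ℕ) (⊤ : SimpleGraph ℕ) := by
  refine ⟨KOmegaAux.sigma, KOmegaAux.sigma_isLegal, ?_⟩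
  intro p hf
  have hadj : ∀ m n : ℕ, m < n →
      s((KOmegaAux.branchRec p hf n).1, (KOmegaAux.branchRec p hf m).1) ∈
        p.claimed makerTurn := by
    intro m n hmn
    obtain ⟨i, hi, hie⟩ := KOmegaAux.branch_adj p hf hmn
    rw [← hie]
    exact KOmegaAux.claimed_of_even p hi
  have hinj : Function.Injective (fun n => (KOmegaAux.branchRec p hf n).1) := by
    intro a b hab
    by_contra hne
    rcases lt_trichotomy a b with h1 | h1 | h1
    · exact KOmegaAux.branch_ne p hf h1 hab
    · exact hne h1
    · exact KOmegaAux.branch_ne p hf h1 hab.symm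
  refine ⟨⟨fun n => (KOmegaAux.branchRec p hf n).1, ?_⟩, hinj⟩
  intro x y hxy
  rw [SimpleGraph.top_adj] at hxy
  rw [SimpleGraph.fromEdgeSet_adj]
  refine ⟨?_, fun he => hxy (hinj he)⟩
  rcases lt_trichotomy x y with h1 | h1 | h1
  · rw [Sym2.eq_swap]
    exact hadj x y h1
  · exact absurd h1 hxy
  · exact hadj y x h1
end

section
/- Let κ be an uncountable cardinal such that every 2-colouring of [κ]² admits a monochromatic set of cardinality κ (in particular, this holds when κ is weakly compact). Then Breaker does not have a winning strategy in the Maker-Breaker game MB(K_κ, K_κ). -/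
open Cardinal

universe u v

namespace MBSteal

open Ordinal

theorem mod_two_cases (γ : Ordinal.{u}) : γ % 2 = 0 ∨ γ % 2 = 1 := by
  have h : γ % 2 < 2 := Ordinal.mod_lt γ (by norm_num)
  generalize hg : γ % 2 = a at h ⊢
  have h2 : (2 : Ordinal) = Order.succ 1 := by
    rw [← Ordinal.add_one_eq_succ]; norm_num
  rw [h2, Order.lt_succ_iff] at h
  rcases lt_or_eq_of_le h with h1 | h1
  · exact Or.inl (Ordinal.lt_one_iff_zero.mp h1)
  · exact Or.inr h1

theorem succ_mod_two_even {δ : Ordinal.{u}} (h : δ % 2 = 0) : (δ + 1) % 2 = 1 := by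
  have hd := Ordinal.div_add_mod δ 2
  rw [h, add_zero] at hd
  rw [← hd, Ordinal.mul_add_mod_self]
  exact Ordinal.mod_eq_of_lt one_lt_two

theorem succ_mod_two_odd {δ : Ordinal.{u}} (h : δ % 2 = 1) : (δ + 1) % 2 = 0 := by
  have hd := Ordinal.div_add_mod δ 2
  rw [h] at hd
  have : δ + 1 = 2 * (δ / 2 + 1) := by
    conv_lhs => rw [← hd]
    rw [mul_add, mul_one, add_assoc, one_add_one_eq_two]
  rw [this]
  exact Ordinal.mul_mod 2 _

theorem odd_succ {γ : Ordinal.{u}} (h : γ % 2 = 1) : ∃ δ, γ = δ + 1 ∧ δ % 2 = 0 := by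
  refine ⟨2 * (γ / 2), ?_, Ordinal.mul_mod 2 _⟩
  conv_lhs => rw [← Ordinal.div_add_mod γ 2, h]

theorem pred_mod_two {δ : Ordinal.{u}} (h : (δ + 1) % 2 = 0) : δ % 2 = 1 := by
  rcases mod_two_cases δ with h0 | h1
  · rw [succ_mod_two_even h0] at h; norm_num at h
  · exact h1

theorem succ_inj' {a b : Ordinal.{u}} (h : a + 1 = b + 1) : a = b := by
  rw [Ordinal.add_one_eq_succ, Ordinal.add_one_eq_succ] at h
  exact Order.succ_injective h

section Game

variable {α : Type u} (σ : MBStrategy α) (B : Set α) (d : α)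

open scoped Classical in
/-- Pick an unclaimed board element if one exists, else the default. -/
noncomputable def pick (claimed : α → Prop) : α :=
  if h : ∃ e, e ∈ B ∧ ¬ claimed e then h.choose else d

theorem pick_spec (claimed : α → Prop) (h : ∃ e, e ∈ B ∧ ¬ claimed e) :
    pick B d claimed ∈ B ∧ ¬ claimed (pick B d claimed) := by
  rw [pick, dif_pos h]; exact h.choose_spec

open scoped Classical in
/-- The moves of the imagined game, in which Maker pretends to be Breaker
playing `σ` against the history `hist` shifted by one. -/
noncomputable def qaux (hist : Ordinal.{u} → α) : Ordinal.{u} → α :=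
  Ordinal.lt_wf.fix fun δ ih =>
    σ δ fun β hβ => if β % 2 = 1 then ih β hβ else hist (β + 1)

open scoped Classical in
theorem qaux_eq (hist : Ordinal.{u} → α) (δ : Ordinal.{u}) :
    qaux σ hist δ
      = σ δ (fun β _ => if β % 2 = 1 then qaux σ hist β else hist (β + 1)) := by
  rw [qaux, WellFounded.fix_eq]

theorem qaux_congr (h₁ h₂ : Ordinal.{u} → α) :
    ∀ δ, (∀ β, β ≤ δ → h₁ β = h₂ β) → qaux σ h₁ δ = qaux σ h₂ δ := by
  intro δ
  induction δ using Ordinal.induction with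
  | _ δ IH =>
    intro hag
    rw [qaux_eq, qaux_eq]
    congr 1
    funext β hβ
    by_cases hb : β % 2 = 1
    · rw [if_pos hb, if_pos hb]
      exact IH β hβ fun β' hβ' => hag β' (hβ'.trans hβ.le)
    · rw [if_neg hb, if_neg hb]
      exact hag (β + 1) (Order.add_one_le_iff.mpr hβ)

open scoped Classical in
/-- The real play `p`: at odd turns Breaker plays `σ`; at even successor turns
Maker steals the move of the imagined game if it is available, otherwise (and
at turn `0` and limit turns) she plays an arbitrary unclaimed element. -/
noncomputable def pmove : Ordinal.{u} → α :=
  Ordinal.lt_wf.fix fun γ ih =>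
    if γ % 2 = 1 then σ γ fun β hβ => ih β hβ
    else if h : ∃ δ, γ = δ + 1 then
      if qaux σ (fun β => if hβ : β < γ then ih β hβ else d) h.choose ∈ B ∧
          (∀ β (hβ : β < γ),
            ih β hβ ≠ qaux σ (fun β => if hβ : β < γ then ih β hβ else d) h.choose) then
        qaux σ (fun β => if hβ : β < γ then ih β hβ else d) h.choose
      else pick B d fun e => ∃ β, ∃ hβ : β < γ, ih β hβ = e
    else pick B d fun e => ∃ β, ∃ hβ : β < γ, ih β hβ = e

open scoped Classical in
theorem pmove_eq (γ : Ordinal.{u}) : pmove σ B d γ =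
    if γ % 2 = 1 then σ γ fun β _ => pmove σ B d β
    else if h : ∃ δ, γ = δ + 1 then
      if qaux σ (fun β => if hβ : β < γ then pmove σ B d β else d) h.choose ∈ B ∧
          (∀ β (_ : β < γ),
            pmove σ B d β ≠ qaux σ (fun β => if hβ : β < γ then pmove σ B d β else d) h.choose) then
        qaux σ (fun β => if hβ : β < γ then pmove σ B d β else d) h.choose
      else pick B d fun e => ∃ β, ∃ _ : β < γ, pmove σ B d β = e
    else pick B d fun e => ∃ β, ∃ _ : β < γ, pmove σ B d β = e := by
  rw [pmove, WellFounded.fix_eq]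

/-- The elements claimed in the real play before turn `γ`. -/
def pclaimed (γ : Ordinal.{u}) (e : α) : Prop := ∃ β, ∃ _ : β < γ, pmove σ B d β = e

theorem pclaimed_mono {γ₁ γ₂ : Ordinal.{u}} (h : γ₁ ≤ γ₂) {e : α}
    (he : pclaimed σ B d γ₁ e) : pclaimed σ B d γ₂ e := by
  obtain ⟨β, hβ, hb⟩ := he; exact ⟨β, hβ.trans_le h, hb⟩

theorem pmove_inv (hleg : σ.IsLegal B breakerTurn) :
    ∀ γ : Ordinal.{u}, (∃ e ∈ B, ¬ pclaimed σ B d γ e) →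
      pmove σ B d γ ∈ B ∧ ¬ pclaimed σ B d γ (pmove σ B d γ) := by
  intro γ
  induction γ using Ordinal.induction with
  | _ γ IH =>
    intro hex
    obtain ⟨e, heB, he⟩ := hex
    have hmem : ∀ β (hβ : β < γ), pmove σ B d β ∈ B := fun β hβ =>
      (IH β hβ ⟨e, heB, fun hc => he (pclaimed_mono σ B d hβ.le hc)⟩).1
    have hfresh : ∀ β (hβ : β < γ), ¬ pclaimed σ B d β (pmove σ B d β) := fun β hβ =>
      (IH β hβ ⟨e, heB, fun hc => he (pclaimed_mono σ B d hβ.le hc)⟩).2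
    have hinj : ∀ β₁ (h₁ : β₁ < γ) β₂ (h₂ : β₂ < γ),
        pmove σ B d β₁ = pmove σ B d β₂ → β₁ = β₂ := by
      intro β₁ h₁ β₂ h₂ hb
      rcases lt_trichotomy β₁ β₂ with h | h | h
      · exact absurd ⟨β₁, h, hb⟩ (hfresh β₂ h₂)
      · exact h
      · exact absurd ⟨β₂, h, hb.symm⟩ (hfresh β₁ h₁)
    have hne : ∀ β (hβ : β < γ), pmove σ B d β ≠ e := fun β hβ hc => he ⟨β, hβ, hc⟩
    rw [pmove_eq]
    by_cases hodd : γ % 2 = 1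
    · rw [if_pos hodd]
      have hL := hleg γ (fun β hβ => pmove σ B d β) hodd hmem hinj ⟨e, heB, hne⟩
      exact ⟨hL.1, fun hc => by obtain ⟨β, hβ, hb⟩ := hc; exact hL.2 β hβ hb⟩
    · rw [if_neg hodd]
      by_cases hsucc : ∃ δ, γ = δ + 1
      · rw [dif_pos hsucc]
        split_ifs with hm
        · exact ⟨hm.1, fun hc => by obtain ⟨β, hβ, hb⟩ := hc; exact hm.2 β hβ hb⟩
        · exact pick_spec B d _ ⟨e, heB, he⟩
      · rw [dif_neg hsucc]
        exact pick_spec B d _ ⟨e, heB, he⟩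

theorem pexhaust (hleg : σ.IsLegal B breakerTurn) :
    ∃ γ : Ordinal.{u}, ∀ e ∈ B, pclaimed σ B d γ e := by
  by_contra hc
  push_neg at hc
  have hinj : Function.Injective (pmove σ B d) := by
    intro a b hab
    by_contra hne
    rcases lt_or_gt_of_ne hne with h | h
    · exact (pmove_inv σ B d hleg b (hc b)).2 ⟨a, h, hab⟩
    · exact (pmove_inv σ B d hleg a (hc a)).2 ⟨b, h, hab.symm⟩
  exact not_injective_of_ordinal _ hinj

/-- The length of the real play: the first point where the board is full. -/
noncomputable def plen : Ordinal.{u} := sInf {γ | ∀ e ∈ B, pclaimed σ B d γ e}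

theorem plen_exhaust (hleg : σ.IsLegal B breakerTurn) :
    ∀ e ∈ B, pclaimed σ B d (plen σ B d) e :=
  csInf_mem (pexhaust σ B d hleg)

theorem plen_min {γ : Ordinal.{u}} (h : γ < plen σ B d) :
    ∃ e ∈ B, ¬ pclaimed σ B d γ e := by
  by_contra hc
  push_neg at hc
  exact absurd (csInf_le' (s := {γ | ∀ e ∈ B, pclaimed σ B d γ e}) hc) (not_le.mpr h)

open scoped Classical in
/-- The imagined play `q`: at odd turns Breaker plays `σ`; at even turns Maker
copies Breaker's next move from the real play while it lasts, and afterwards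
plays arbitrary unclaimed elements. -/
noncomputable def qmove : Ordinal.{u} → α :=
  Ordinal.lt_wf.fix fun δ ih =>
    if δ % 2 = 1 then σ δ fun β hβ => ih β hβ
    else if δ + 1 < plen σ B d then pmove σ B d (δ + 1)
    else pick B d fun e => ∃ β, ∃ hβ : β < δ, ih β hβ = e

open scoped Classical in
theorem qmove_eq (δ : Ordinal.{u}) : qmove σ B d δ =
    if δ % 2 = 1 then σ δ fun β _ => qmove σ B d β
    else if δ + 1 < plen σ B d then pmove σ B d (δ + 1)
    else pick B d fun e => ∃ β, ∃ _ : β < δ, qmove σ B d β = e := by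
  rw [qmove, WellFounded.fix_eq]

/-- The elements claimed in the imagined play before turn `δ`. -/
def qclaimed (δ : Ordinal.{u}) (e : α) : Prop := ∃ β, ∃ _ : β < δ, qmove σ B d β = e

theorem qclaimed_mono {δ₁ δ₂ : Ordinal.{u}} (h : δ₁ ≤ δ₂) {e : α}
    (he : qclaimed σ B d δ₁ e) : qclaimed σ B d δ₂ e := by
  obtain ⟨β, hβ, hb⟩ := he; exact ⟨β, hβ.trans_le h, hb⟩

theorem qmove_spec (hleg : σ.IsLegal B breakerTurn) :
    ∀ δ : Ordinal.{u},
      (δ + 1 < plen σ B d →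
        qmove σ B d δ
            = (if δ % 2 = 1 then qaux σ (pmove σ B d) δ else pmove σ B d (δ + 1)) ∧
          pclaimed σ B d (δ + 1 + 1) (qmove σ B d δ)) ∧
      ((∃ e ∈ B, ¬ qclaimed σ B d δ e) →
        qmove σ B d δ ∈ B ∧ ¬ qclaimed σ B d δ (qmove σ B d δ)) := by
  intro δ
  induction δ using Ordinal.induction with
  | _ δ IH =>
    constructor
    · -- main phase
      intro hlt
      have hδ1 : δ < δ + 1 := Order.lt_add_one_iff.mpr le_rfl
      have hδp : δ < plen σ B d := hδ1.trans hlt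
      have hblt : ∀ β, β < δ → β + 1 < plen σ B d := fun β hβ =>
        lt_of_le_of_lt (Order.add_one_le_iff.mpr hβ) hδp
      have hsub : ∀ β (hβ : β < δ), pclaimed σ B d (δ + 1) (qmove σ B d β) := by
        intro β hβ
        have h2 := ((IH β hβ).1 (hblt β hβ)).2
        exact pclaimed_mono σ B d
          (add_le_add (Order.add_one_le_iff.mpr hβ) le_rfl) h2
      obtain ⟨e, heB, hecl⟩ := plen_min σ B d hlt
      have hne : ∀ β (hβ : β < δ), qmove σ B d β ≠ e := fun β hβ hc =>
        hecl (hc ▸ hsub β hβ)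
      have hqmem : ∀ β (hβ : β < δ), qmove σ B d β ∈ B := fun β hβ =>
        ((IH β hβ).2 ⟨e, heB, fun hc => by
          obtain ⟨β', hβ', hb⟩ := hc; exact hne β' (hβ'.trans hβ) hb⟩).1
      have hqfresh : ∀ β (hβ : β < δ), ¬ qclaimed σ B d β (qmove σ B d β) := fun β hβ =>
        ((IH β hβ).2 ⟨e, heB, fun hc => by
          obtain ⟨β', hβ', hb⟩ := hc; exact hne β' (hβ'.trans hβ) hb⟩).2
      have hqinj : ∀ β₁ (h₁ : β₁ < δ) β₂ (h₂ : β₂ < δ),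
          qmove σ B d β₁ = qmove σ B d β₂ → β₁ = β₂ := by
        intro β₁ h₁ β₂ h₂ hb
        rcases lt_trichotomy β₁ β₂ with h | h | h
        · exact absurd ⟨β₁, h, hb⟩ (hqfresh β₂ h₂)
        · exact h
        · exact absurd ⟨β₂, h, hb.symm⟩ (hqfresh β₁ h₁)
      by_cases hodd : δ % 2 = 1
      · have hlink : qmove σ B d δ = qaux σ (pmove σ B d) δ := by
          rw [qmove_eq, if_pos hodd, qaux_eq]
          congr 1
          funext β hβ
          have h1 := ((IH β hβ).1 (hblt β hβ)).1
          by_cases hb : β % 2 = 1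
          · rw [if_pos hb, h1, if_pos hb]
          · rw [if_neg hb, h1, if_neg hb]
        have hL := hleg δ (fun β hβ => qmove σ B d β) hodd hqmem hqinj ⟨e, heB, hne⟩
        have hmemδ : qmove σ B d δ ∈ B := by
          rw [qmove_eq, if_pos hodd]; exact hL.1
        have hev : ¬ (δ + 1) % 2 = 1 := by rw [succ_mod_two_odd hodd]; norm_num
        have hsx : ∃ δ', δ + 1 = δ' + 1 := ⟨δ, rfl⟩
        have hchoose : hsx.choose = δ := (succ_inj' hsx.choose_spec).symm
        have hqc : qaux σ (fun β => if hβ : β < δ + 1 then pmove σ B d β else d) hsx.choose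
            = qmove σ B d δ := by
          rw [hchoose]
          refine (qaux_congr σ _ _ δ fun β hβ => ?_).trans hlink.symm
          rw [dif_pos (lt_of_le_of_lt hβ (Order.add_one_le_iff.mp le_rfl))]
        have hp1 := pmove_eq σ B d (δ + 1)
        rw [if_neg hev, dif_pos hsx] at hp1
        refine ⟨by rw [if_pos hodd]; exact hlink, ?_⟩
        by_cases hm : qaux σ (fun β => if hβ : β < δ + 1 then pmove σ B d β else d)
              hsx.choose ∈ B ∧
            ∀ β (_ : β < δ + 1), pmove σ B d β
              ≠ qaux σ (fun β => if hβ : β < δ + 1 then pmove σ B d β else d) hsx.choose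
        · rw [if_pos hm] at hp1
          exact ⟨δ + 1, Order.lt_add_one_iff.mpr le_rfl, by rw [hp1, hqc]⟩
        · rw [hqc] at hm
          push_neg at hm
          obtain ⟨β, hβ, hb⟩ := hm hmemδ
          exact pclaimed_mono σ B d (Order.lt_add_one_iff.mpr le_rfl).le ⟨β, hβ, hb⟩
      · have hq : qmove σ B d δ = pmove σ B d (δ + 1) := by
          rw [qmove_eq, if_neg hodd, if_pos hlt]
        exact ⟨by rw [if_neg hodd]; exact hq,
          ⟨δ + 1, Order.lt_add_one_iff.mpr le_rfl, hq.symm⟩⟩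
    · -- legality of individual moves
      intro hex
      obtain ⟨e, heB, he⟩ := hex
      have hne : ∀ β (hβ : β < δ), qmove σ B d β ≠ e := fun β hβ hc => he ⟨β, hβ, hc⟩
      have hqmem : ∀ β (hβ : β < δ), qmove σ B d β ∈ B := fun β hβ =>
        ((IH β hβ).2 ⟨e, heB, fun hc => he (qclaimed_mono σ B d hβ.le hc)⟩).1
      have hqfresh : ∀ β (hβ : β < δ), ¬ qclaimed σ B d β (qmove σ B d β) := fun β hβ =>
        ((IH β hβ).2 ⟨e, heB, fun hc => he (qclaimed_mono σ B d hβ.le hc)⟩).2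
      have hqinj : ∀ β₁ (h₁ : β₁ < δ) β₂ (h₂ : β₂ < δ),
          qmove σ B d β₁ = qmove σ B d β₂ → β₁ = β₂ := by
        intro β₁ h₁ β₂ h₂ hb
        rcases lt_trichotomy β₁ β₂ with h | h | h
        · exact absurd ⟨β₁, h, hb⟩ (hqfresh β₂ h₂)
        · exact h
        · exact absurd ⟨β₂, h, hb.symm⟩ (hqfresh β₁ h₁)
      by_cases hodd : δ % 2 = 1
      · have hL := hleg δ (fun β hβ => qmove σ B d β) hodd hqmem hqinj ⟨e, heB, hne⟩
        rw [qmove_eq, if_pos hodd]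
        exact ⟨hL.1, fun hc => by obtain ⟨β, hβ, hb⟩ := hc; exact hL.2 β hβ hb⟩
      · rw [qmove_eq, if_neg hodd]
        by_cases hlt : δ + 1 < plen σ B d
        · rw [if_pos hlt]
          have hpi := pmove_inv σ B d hleg (δ + 1) (plen_min σ B d hlt)
          refine ⟨hpi.1, ?_⟩
          rintro ⟨β, hβ, hb⟩
          have hβ1 : β + 1 < plen σ B d :=
            lt_of_le_of_lt (Order.add_one_le_iff.mpr hβ)
              ((Order.lt_add_one_iff.mpr le_rfl).trans hlt)
          have h2 := ((IH β hβ).1 hβ1).2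
          have h3 : pclaimed σ B d (δ + 1) (qmove σ B d β) :=
            pclaimed_mono σ B d (add_le_add (Order.add_one_le_iff.mpr hβ) le_rfl) h2
          rw [hb] at h3
          exact hpi.2 h3
        · rw [if_neg hlt]
          exact pick_spec B d _ ⟨e, heB, he⟩

theorem qexhaust (hleg : σ.IsLegal B breakerTurn) :
    ∃ δ : Ordinal.{u}, ∀ e ∈ B, qclaimed σ B d δ e := by
  by_contra hc
  push_neg at hc
  have hinj : Function.Injective (qmove σ B d) := by
    intro a b hab
    by_contra hne
    rcases lt_or_gt_of_ne hne with h | h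
    · exact ((qmove_spec σ B d hleg b).2 (hc b)).2 ⟨a, h, hab⟩
    · exact ((qmove_spec σ B d hleg a).2 (hc a)).2 ⟨b, h, hab.symm⟩
  exact not_injective_of_ordinal _ hinj

/-- The length of the imagined play. -/
noncomputable def qlen : Ordinal.{u} := sInf {δ | ∀ e ∈ B, qclaimed σ B d δ e}

theorem qlen_exhaust (hleg : σ.IsLegal B breakerTurn) :
    ∀ e ∈ B, qclaimed σ B d (qlen σ B d) e :=
  csInf_mem (qexhaust σ B d hleg)

theorem qlen_min {δ : Ordinal.{u}} (h : δ < qlen σ B d) :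
    ∃ e ∈ B, ¬ qclaimed σ B d δ e := by
  by_contra hc
  push_neg at hc
  exact absurd (csInf_le' (s := {δ | ∀ e ∈ B, qclaimed σ B d δ e}) hc) (not_le.mpr h)

/-- Every element claimed by Breaker in the real play is claimed by Maker in
the imagined play. -/
theorem pbreaker_in_qmaker (hleg : σ.IsLegal B breakerTurn) {γ : Ordinal.{u}}
    (hγ : γ < plen σ B d) (hodd : γ % 2 = 1) :
    ∃ δ, ∃ _ : δ < qlen σ B d, δ % 2 = 0 ∧ qmove σ B d δ = pmove σ B d γ := by
  obtain ⟨δ, rfl, hδ0⟩ := odd_succ hodd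
  have hnotodd : ¬ δ % 2 = 1 := by rw [hδ0]; norm_num
  by_cases hq : δ < qlen σ B d
  · refine ⟨δ, hq, hδ0, ?_⟩
    have h1 := ((qmove_spec σ B d hleg δ).1 hγ).1
    rwa [if_neg hnotodd] at h1
  · exfalso
    push_neg at hq
    obtain ⟨e, heB, hecl⟩ := plen_min σ B d hγ
    obtain ⟨β, hβq, hb⟩ := qlen_exhaust σ B d hleg e heB
    have hβδ : β < δ := lt_of_lt_of_le hβq hq
    have hδp : δ < plen σ B d := (Order.lt_add_one_iff.mpr le_rfl).trans hγ
    have hβ1 : β + 1 < plen σ B d :=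
      lt_of_le_of_lt (Order.add_one_le_iff.mpr hβδ) hδp
    have h2 := ((qmove_spec σ B d hleg β).1 hβ1).2
    exact hecl (pclaimed_mono σ B d
      (add_le_add (Order.add_one_le_iff.mpr hβδ) le_rfl) (hb ▸ h2))

end Game


end MBSteal


/-- Let `κ` be an uncountable cardinal such that every
`2`-colouring of the pairs from a set of size `κ` admits a monochromatic set of
cardinality `κ` (in particular this holds when `κ` is weakly compact).  Then
Breaker does not have a winning strategy in the Maker–Breaker game
`MB(K_κ, K_κ)`. -/
theorem not_breakerWins_complete_of_ramsey
    (κ : Cardinal.{u}) (hκ : ℵ₀ < κ) (V : Type u) (hV : #V = κ)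
    (hRamsey : ∀ c : Sym2 V → Bool, ∃ (S : Set V) (i : Bool), #S = κ ∧
      ∀ x ∈ S, ∀ y ∈ S, x ≠ y → c s(x, y) = i) :
    ¬ BreakerWins (⊤ : SimpleGraph V) (⊤ : SimpleGraph V) := by

  rintro ⟨σ, hleg, hwin⟩
  classical
  have hVne : Nonempty V := by
    by_contra h
    rw [not_nonempty_iff] at h
    have h0 : κ = 0 := by rw [← hV]; exact Cardinal.mk_eq_zero V
    rw [h0] at hκ
    exact absurd hκ (by simp)
  obtain ⟨v0⟩ := hVne
  set B : Set (Sym2 V) := (⊤ : SimpleGraph V).edgeSet with hBdef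
  set d : Sym2 V := s(v0, v0) with hddef
  let P : MBPlay B :=
    { len := MBSteal.plen σ B d
      move := fun γ _ => MBSteal.pmove σ B d γ
      move_mem := fun γ h =>
        (MBSteal.pmove_inv σ B d hleg γ (MBSteal.plen_min σ B d h)).1
      move_inj := by
        intro γ₁ h₁ γ₂ h₂ hb
        rcases lt_trichotomy γ₁ γ₂ with h | h | h
        · exact absurd ⟨γ₁, h, hb⟩
            (MBSteal.pmove_inv σ B d hleg γ₂ (MBSteal.plen_min σ B d h₂)).2
        · exact h
        · exact absurd ⟨γ₂, h, hb.symm⟩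
            (MBSteal.pmove_inv σ B d hleg γ₁ (MBSteal.plen_min σ B d h₁)).2
      complete := fun e he => by
        obtain ⟨β, hβ, hb⟩ := MBSteal.plen_exhaust σ B d hleg e he
        exact ⟨β, hβ, hb⟩ }
  have hPfol : P.Follows breakerTurn σ := by
    intro γ h hturn
    show MBSteal.pmove σ B d γ = _
    rw [MBSteal.pmove_eq, if_pos (show γ % 2 = 1 from hturn)]
  have hP := hwin P hPfol
  let Q : MBPlay B :=
    { len := MBSteal.qlen σ B d
      move := fun δ _ => MBSteal.qmove σ B d δ
      move_mem := fun δ h =>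
        ((MBSteal.qmove_spec σ B d hleg δ).2 (MBSteal.qlen_min σ B d h)).1
      move_inj := by
        intro δ₁ h₁ δ₂ h₂ hb
        rcases lt_trichotomy δ₁ δ₂ with h | h | h
        · exact absurd ⟨δ₁, h, hb⟩
            ((MBSteal.qmove_spec σ B d hleg δ₂).2 (MBSteal.qlen_min σ B d h₂)).2
        · exact h
        · exact absurd ⟨δ₂, h, hb.symm⟩
            ((MBSteal.qmove_spec σ B d hleg δ₁).2 (MBSteal.qlen_min σ B d h₁)).2
      complete := fun e he => by
        obtain ⟨β, hβ, hb⟩ := MBSteal.qlen_exhaust σ B d hleg e he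
        exact ⟨β, hβ, hb⟩ }
  have hQfol : Q.Follows breakerTurn σ := by
    intro δ h hturn
    show MBSteal.qmove σ B d δ = _
    rw [MBSteal.qmove_eq, if_pos (show δ % 2 = 1 from hturn)]
  have hQ := hwin Q hQfol
  obtain ⟨S, i, hScard, hmono⟩ := hRamsey fun e => decide (e ∈ P.claimed makerTurn)
  obtain ⟨f⟩ : Nonempty (V ≃ S) := Cardinal.eq.mp (by rw [hV, hScard])
  have hfinj : Function.Injective fun v => (f v : V) := fun a b h =>
    f.injective (Subtype.ext h)
  cases i with
  | true =>
    apply hP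
    refine ⟨⟨fun v => (f v : V), ?_⟩, hfinj⟩
    intro a b hab
    have hab' : a ≠ b := (SimpleGraph.top_adj a b).mp hab
    have hne : (f a : V) ≠ (f b : V) := fun h => hab' (f.injective (Subtype.ext h))
    have hcol := hmono (f a) (f a).2 (f b) (f b).2 hne
    simp only [decide_eq_true_eq] at hcol
    rw [SimpleGraph.fromEdgeSet_adj]
    exact ⟨hcol, hne⟩
  | false =>
    apply hQ
    refine ⟨⟨fun v => (f v : V), ?_⟩, hfinj⟩
    intro a b hab
    have hab' : a ≠ b := (SimpleGraph.top_adj a b).mp hab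
    have hne : (f a : V) ≠ (f b : V) := fun h => hab' (f.injective (Subtype.ext h))
    have hcol := hmono (f a) (f a).2 (f b) (f b).2 hne
    simp only [decide_eq_false_iff_not] at hcol
    have heB : s((f a : V), (f b : V)) ∈ B := by
      rw [hBdef, SimpleGraph.mem_edgeSet, SimpleGraph.top_adj]
      exact hne
    obtain ⟨γ, hγ, hb⟩ := P.complete _ heB
    have hγodd : γ % 2 = 1 := by
      rcases MBSteal.mod_two_cases γ with h0 | h1
      · exact absurd ⟨γ, hγ, h0, hb⟩ hcol
      · exact h1
    obtain ⟨δ, hδ, hδ0, hqp⟩ := MBSteal.pbreaker_in_qmaker σ B d hleg hγ hγodd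
    rw [SimpleGraph.fromEdgeSet_adj]
    refine ⟨⟨δ, hδ, hδ0, ?_⟩, hne⟩
    show MBSteal.qmove σ B d δ = _
    rw [hqp]
    exact hb
end
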